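/- Let R be a commutative ring with total ring of fractions F(R), and P ∈ F(R)^{n×m}, C ∈ F(R)^{m×n} with det(E_n + PC) a unit of F(R). Then H(C,P) = U · H(P,C) · V where U = [[O, −E_n],[E_m, O]] and V = [[O, E_m],[−E_n, O]], and consequently the R-modules T_{H(P,C),R} and T_{H(C,P),R} are isomorphic. -/

import Mathlib

open Matrix

/-- The feedback matrix `H(P,C)`. -/
noncomputable def Hmat {F : Type*} [CommRing F] {n m : ℕ}
    (P : Matrix (Fin n) (Fin m) F) (C : Matrix (Fin m) (Fin n) F) :
    Matrix (Fin n ⊕ Fin m) (Fin n ⊕ Fin m) F :=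
  Matrix.fromBlocks (1 + P * C)⁻¹ (-(P * (1 + C * P)⁻¹))
    (C * (1 + P * C)⁻¹) (1 + C * P)⁻¹

section Aux

variable {R F : Type*} [CommRing R] [CommRing F] [Algebra R F]

lemma row_mul {k l l' : Type*} [Fintype l] (A : Matrix k l F) (D : Matrix l l' F) (i : k) :
    (A * D) i = (A i) ᵥ* D := by
  funext j
  simp [Matrix.mul_apply, Matrix.vecMul, dotProduct]

/-- Right multiplication by an invertible matrix, as an `R`-linear equivalence. -/
noncomputable def vecMulEquiv {l l' : Type*} [Fintype l] [Fintype l']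
    [DecidableEq l] [DecidableEq l'] (D : Matrix l l' F) (D' : Matrix l' l F) (h1 : D * D' = 1) (h2 : D' * D = 1) :
    (l → F) ≃ₗ[R] (l' → F) where
  toFun v := v ᵥ* D
  invFun v := v ᵥ* D'
  map_add' u v := by
    funext j
    simp [Matrix.vecMul, dotProduct, add_mul, Finset.sum_add_distrib]
  map_smul' r v := by
    funext j
    simp [Matrix.vecMul, dotProduct, Finset.smul_sum, smul_mul_assoc]
  left_inv v := by
    show (v ᵥ* D) ᵥ* D' = v
    rw [Matrix.vecMul_vecMul, h1, Matrix.vecMul_one]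
  right_inv v := by
    show (v ᵥ* D') ᵥ* D = v
    rw [Matrix.vecMul_vecMul, h2, Matrix.vecMul_one]

/-- The `R`-span of the rows of `A * D` is isomorphic to that of the rows of `A`,
when `D` is invertible. -/
lemma span_rows_mul_equiv {k l l' : Type*} [Fintype l] [Fintype l']
    [DecidableEq l] [DecidableEq l'] (A : Matrix k l F) (D : Matrix l l' F) (D' : Matrix l' l F)
    (h1 : D * D' = 1) (h2 : D' * D = 1) :
    Nonempty ((Submodule.span R (Set.range fun i => A i)) ≃ₗ[R]
      (Submodule.span R (Set.range fun i => (A * D) i))) := by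
  let e : (l → F) ≃ₗ[R] (l' → F) := vecMulEquiv D D' h1 h2
  have hmap : (Submodule.span R (Set.range fun i => A i)).map (e : (l → F) →ₗ[R] (l' → F))
      = Submodule.span R (Set.range fun i => (A * D) i) := by
    have hco : (⇑(e : (l → F) →ₗ[R] l' → F) ∘ fun i => A i) = fun i => (A * D) i := by
      funext i
      show (A i) ᵥ* D = (A * D) i
      exact (row_mul A D i).symm
    rw [Submodule.map_span, ← Set.range_comp, hco]
  exact ⟨(e.submoduleMap _).trans (LinearEquiv.ofEq _ _ hmap)⟩

lemma span_rows_mulLeft_le {k k' l : Type*} [Fintype k]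
    (G : Matrix k' k R) (A : Matrix k l F) :
    Submodule.span R (Set.range fun i => ((G.map (algebraMap R F)) * A) i)
      ≤ Submodule.span R (Set.range fun i => A i) := by
  rw [Submodule.span_le]
  rintro _ ⟨i, rfl⟩
  show ((G.map (algebraMap R F)) * A) i ∈ _
  have : ((G.map (algebraMap R F)) * A) i = ∑ j, G i j • A j := by
    funext c
    simp [Matrix.mul_apply, Algebra.smul_def]
  rw [this]
  exact Submodule.sum_mem _ fun j _ =>
    Submodule.smul_mem _ _ (Submodule.subset_span ⟨j, rfl⟩)

lemma span_rows_mulLeft_eq {k k' l : Type*} [Fintype k] [Fintype k'] [DecidableEq k]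
    (G : Matrix k' k R) (G' : Matrix k k' R) (h : G' * G = 1) (A : Matrix k l F) :
    Submodule.span R (Set.range fun i => ((G.map (algebraMap R F)) * A) i)
      = Submodule.span R (Set.range fun i => A i) := by
  refine le_antisymm (span_rows_mulLeft_le G A) ?_
  have hA : A = (G'.map (algebraMap R F)) * ((G.map (algebraMap R F)) * A) := by
    rw [← Matrix.mul_assoc, ← Matrix.map_mul, h, Matrix.map_one _ (map_zero _) (map_one _), Matrix.one_mul]
  nth_rewrite 1 [hA]
  exact span_rows_mulLeft_le G' _

lemma span_rows_fromRows {k1 k2 l : Type*} (A : Matrix k1 l F) (B : Matrix k2 l F) :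
    Submodule.span R (Set.range fun i => Matrix.fromRows A B i)
      = Submodule.span R (Set.range fun i => A i)
        ⊔ Submodule.span R (Set.range fun i => B i) := by
  rw [← Submodule.span_union]
  congr 1
  have : (fun i => Matrix.fromRows A B i) = Sum.elim (fun i => A i) (fun i => B i) := by
    funext i; cases i <;> rfl
  rw [this, Set.Sum.elim_range]

end Aux

/-- `H(C,P) = U · H(P,C) · V`, and consequently
`T_{H(P,C),R} ≅ T_{H(C,P),R}`. -/
theorem stmt_6 {R : Type*} [CommRing R] {n m : ℕ}
    (P : Matrix (Fin n) (Fin m) (FractionRing R))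
    (C : Matrix (Fin m) (Fin n) (FractionRing R))
    (hu : IsUnit (1 + P * C).det) :
    (Hmat C P =
      (Matrix.fromBlocks 0 (-1) 1 0 :
          Matrix (Fin m ⊕ Fin n) (Fin n ⊕ Fin m) (FractionRing R)) *
        Hmat P C *
      (Matrix.fromBlocks 0 1 (-1) 0 :
          Matrix (Fin n ⊕ Fin m) (Fin m ⊕ Fin n) (FractionRing R))) ∧
    (∀ (NH DH : Matrix (Fin n ⊕ Fin m) (Fin n ⊕ Fin m) R)
       (NH' DH' : Matrix (Fin m ⊕ Fin n) (Fin m ⊕ Fin n) R),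
      DH.det ∈ nonZeroDivisors R → DH'.det ∈ nonZeroDivisors R →
      Hmat P C * DH.map (algebraMap R (FractionRing R))
        = NH.map (algebraMap R (FractionRing R)) →
      Hmat C P * DH'.map (algebraMap R (FractionRing R))
        = NH'.map (algebraMap R (FractionRing R)) →
      Nonempty
        ((Submodule.span R (Set.range fun i => Matrix.fromRows NH DH i)) ≃ₗ[R]
         (Submodule.span R (Set.range fun i => Matrix.fromRows NH' DH' i)))) := by
  classical
  have part1 : Hmat C P =
      (Matrix.fromBlocks 0 (-1) 1 0 :
          Matrix (Fin m ⊕ Fin n) (Fin n ⊕ Fin m) (FractionRing R)) * Hmat P C *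
      (Matrix.fromBlocks 0 1 (-1) 0 :
          Matrix (Fin n ⊕ Fin m) (Fin m ⊕ Fin n) (FractionRing R)) := by
    rw [Hmat, Hmat, Matrix.fromBlocks_multiply, Matrix.fromBlocks_multiply]
    simp [Matrix.neg_mul, Matrix.mul_neg]
  refine ⟨part1, ?_⟩
  intro NH DH NH' DH' hDH hDH' hN hN'
  have key : ∀ (k : Type) (_ : Fintype k) (_ : DecidableEq k)
      (Y : Matrix k k (FractionRing R)) (N D : Matrix k k R),
      D.det ∈ nonZeroDivisors R →
      Y * D.map (algebraMap R (FractionRing R)) = N.map (algebraMap R (FractionRing R)) →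
      Nonempty ((Submodule.span R (Set.range fun i => Matrix.fromRows N D i)) ≃ₗ[R]
        (Submodule.span R (Set.range fun i =>
          Matrix.fromRows Y (1 : Matrix k k (FractionRing R)) i))) := by
    intro k _ _ Y N D hD hND
    set f := algebraMap R (FractionRing R) with hf
    have hdet : IsUnit ((D.map f).det) := by
      rw [← RingHom.mapMatrix_apply, ← RingHom.map_det]
      exact IsLocalization.map_units (M := nonZeroDivisors R) (FractionRing R) ⟨D.det, hD⟩
    have h1 : D.map f * (D.map f)⁻¹ = 1 := Matrix.mul_nonsing_inv _ hdet
    have h2 : (D.map f)⁻¹ * D.map f = 1 := Matrix.nonsing_inv_mul _ hdet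
    let ℓ : (k → R) →ₗ[R] (k → FractionRing R) := (Algebra.linearMap R (FractionRing R)).compLeft k
    have hinj : Function.Injective ℓ := fun u v h => funext fun j =>
      IsFractionRing.injective R (FractionRing R) (congrFun h j)
    have e1 := Submodule.equivMapOfInjective ℓ hinj
      (Submodule.span R (Set.range fun i => Matrix.fromRows N D i))
    have hprod : Matrix.fromRows Y (1 : Matrix k k (FractionRing R)) * D.map f
        = Matrix.fromRows (N.map f) (D.map f) := by
      rw [Matrix.fromRows_mul, Matrix.one_mul, hND]
    have hfun : (⇑ℓ ∘ fun i => Matrix.fromRows N D i)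
        = fun i => Matrix.fromRows (N.map f) (D.map f) i := by
      funext i
      cases i <;> funext j <;>
        simp [ℓ, LinearMap.compLeft, Matrix.map_apply] <;> rfl
    have hmap : (Submodule.span R (Set.range fun i => Matrix.fromRows N D i)).map ℓ
        = Submodule.span R
          (Set.range fun i =>
            (Matrix.fromRows Y (1 : Matrix k k (FractionRing R)) * D.map f) i) := by
      rw [Submodule.map_span, ← Set.range_comp, hfun, hprod]
    have e2 := span_rows_mul_equiv (R := R)
      (Matrix.fromRows Y (1 : Matrix k k (FractionRing R))) (D.map f) (D.map f)⁻¹ h1 h2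
    exact ⟨(e1.trans (LinearEquiv.ofEq _ _ hmap)).trans e2.some.symm⟩
  obtain ⟨eM⟩ := key _ inferInstance inferInstance (Hmat P C) NH DH hDH hN
  obtain ⟨eM'⟩ := key _ inferInstance inferInstance (Hmat C P) NH' DH' hDH' hN'
  set f := algebraMap R (FractionRing R) with hf
  set W : Matrix (Fin m ⊕ Fin n) (Fin n ⊕ Fin m) R := Matrix.fromBlocks 0 (-1) 1 0 with hW
  set W' : Matrix (Fin n ⊕ Fin m) (Fin m ⊕ Fin n) R := Matrix.fromBlocks 0 1 (-1) 0 with hW'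
  have hW'W : W' * W = 1 := by
    rw [hW, hW', ← Matrix.fromBlocks_one]
    simp [Matrix.fromBlocks_multiply, Matrix.neg_mul, Matrix.mul_neg]
  have hWW' : W * W' = 1 := by
    rw [hW, hW', ← Matrix.fromBlocks_one]
    simp [Matrix.fromBlocks_multiply, Matrix.neg_mul, Matrix.mul_neg]
  have hWmap : W.map f = (Matrix.fromBlocks 0 (-1) 1 0 :
      Matrix (Fin m ⊕ Fin n) (Fin n ⊕ Fin m) (FractionRing R)) := by
    ext i j
    cases i <;> cases j <;>
      simp [hW, Matrix.map_apply, Matrix.fromBlocks, Matrix.one_apply, apply_ite f]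
  have hW'map : W'.map f = (Matrix.fromBlocks 0 1 (-1) 0 :
      Matrix (Fin n ⊕ Fin m) (Fin m ⊕ Fin n) (FractionRing R)) := by
    ext i j
    cases i <;> cases j <;>
      simp [hW', Matrix.map_apply, Matrix.fromBlocks, Matrix.one_apply, apply_ite f]
  have hVmul1 : W'.map f * W.map f = 1 := by
    rw [← Matrix.map_mul, hW'W, Matrix.map_one _ (map_zero _) (map_one _)]
  have hVmul2 : W.map f * W'.map f = 1 := by
    rw [← Matrix.map_mul, hWW', Matrix.map_one _ (map_zero _) (map_one _)]
  have hS' : Submodule.span R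
        (Set.range fun i => Matrix.fromRows (Hmat C P)
          (1 : Matrix (Fin m ⊕ Fin n) (Fin m ⊕ Fin n) (FractionRing R)) i)
      = Submodule.span R
        (Set.range fun i =>
          (Matrix.fromRows (Hmat P C)
            (1 : Matrix (Fin n ⊕ Fin m) (Fin n ⊕ Fin m) (FractionRing R)) * W'.map f) i) := by
    rw [Matrix.fromRows_mul, Matrix.one_mul, span_rows_fromRows, span_rows_fromRows]
    congr 1
    · have hX'eq : Hmat C P = W.map f * (Hmat P C * W'.map f) := by
        rw [part1, hWmap, hW'map, Matrix.mul_assoc]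
      rw [hX'eq]
      exact span_rows_mulLeft_eq W W' hW'W (Hmat P C * W'.map f)
    · refine le_antisymm ?_ ?_
      · have h := span_rows_mulLeft_le (R := R) W (W'.map f)
        rwa [hVmul2] at h
      · have h := span_rows_mulLeft_le (R := R) W'
          (1 : Matrix (Fin m ⊕ Fin n) (Fin m ⊕ Fin n) (FractionRing R))
        rwa [Matrix.mul_one] at h
  obtain ⟨eV⟩ := span_rows_mul_equiv (R := R)
    (Matrix.fromRows (Hmat P C)
      (1 : Matrix (Fin n ⊕ Fin m) (Fin n ⊕ Fin m) (FractionRing R))) (W'.map f) (W.map f)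
    hVmul1 hVmul2
  exact ⟨((eM.trans eV).trans (LinearEquiv.ofEq _ _ hS'.symm)).trans eM'.symm⟩
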